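/- Let {λ_k} ⊂ 𝔻 be a sequence of distinct points such that (1 − |λ_{k+1}|)/(1 − |λ_k|) ≤ c for all k, where 0 < c < 1. Then {λ_k} satisfies the Carleson condition: inf_n ∏_{k≠n} |λ_k − λ_n|/|1 − conj(λ_k) λ_n| > 0. -/

import Mathlib

open Filter Finset Topology

lemma conj_denom_norm (z w : ℂ) :
    ‖1 - (starRingEnd ℂ) z * w‖ = ‖1 - (starRingEnd ℂ) w * z‖ := by
  have h : (1 - (starRingEnd ℂ) w * z) = (starRingEnd ℂ) (1 - (starRingEnd ℂ) z * w) := by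
    simp [map_sub, map_mul, mul_comm]
  rw [h, RCLike.norm_conj]

lemma key_identity (z w : ℂ) :
    ‖1 - (starRingEnd ℂ) z * w‖ ^ 2 - ‖z - w‖ ^ 2 = (1 - ‖z‖ ^ 2) * (1 - ‖w‖ ^ 2) := by
  simp only [Complex.sq_norm, Complex.normSq_apply, Complex.sub_re,
    Complex.sub_im, Complex.mul_re, Complex.mul_im, Complex.one_re, Complex.one_im,
    Complex.conj_re, Complex.conj_im]
  ring

lemma term_ge (z w : ℂ) (hz : ‖z‖ < 1) (hw : ‖w‖ < 1) (t : ℝ) (ht0 : 0 ≤ t) (ht1 : t < 1)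
    (hab : 1 - ‖z‖ ≤ t * (1 - ‖w‖)) :
    Real.exp (-(2 * t / (1 - t))) ≤ ‖z - w‖ / ‖1 - (starRingEnd ℂ) z * w‖ := by
  have hR0 : (0:ℝ) ≤ ‖z‖ := norm_nonneg z
  have hs0 : (0:ℝ) ≤ ‖w‖ := norm_nonneg w
  have hsR : ‖w‖ ≤ ‖z‖ := by nlinarith
  have hRs1 : 0 < 1 - ‖z‖ * ‖w‖ := by nlinarith
  have hD : 1 - ‖z‖ * ‖w‖ ≤ ‖1 - (starRingEnd ℂ) z * w‖ := by
    calc 1 - ‖z‖ * ‖w‖ = ‖(1:ℂ)‖ - ‖(starRingEnd ℂ) z * w‖ := by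
          simp [norm_mul, RCLike.norm_conj]
      _ ≤ _ := norm_sub_norm_le _ _
  have hD0 : 0 < ‖1 - (starRingEnd ℂ) z * w‖ := lt_of_lt_of_le hRs1 hD
  have hd0 : (0:ℝ) ≤ ‖z - w‖ := norm_nonneg _
  have hkey := key_identity z w
  -- step 1 : (‖z‖ - ‖w‖) * D ≤ d * (1 - ‖z‖‖w‖)
  have hP : 0 ≤ (1 - ‖z‖ ^ 2) * (1 - ‖w‖ ^ 2) :=
    mul_nonneg (by nlinarith [mul_nonneg (sub_nonneg.2 hz.le) hR0])
      (by nlinarith [mul_nonneg (sub_nonneg.2 hw.le) hs0])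
  have hDsq : (1 - ‖z‖ * ‖w‖) ^ 2 ≤ ‖1 - (starRingEnd ℂ) z * w‖ ^ 2 := by nlinarith
  have hkey2 : (‖1 - (starRingEnd ℂ) z * w‖ ^ 2 - ‖z - w‖ ^ 2) * (1 - ‖z‖ * ‖w‖) ^ 2
      = (1 - ‖z‖ ^ 2) * (1 - ‖w‖ ^ 2) * (1 - ‖z‖ * ‖w‖) ^ 2 := by rw [hkey]
  have hsq : ((‖z‖ - ‖w‖) * ‖1 - (starRingEnd ℂ) z * w‖) ^ 2
      ≤ (‖z - w‖ * (1 - ‖z‖ * ‖w‖)) ^ 2 := by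
    nlinarith [mul_nonneg hP (sub_nonneg.2 hDsq), hkey2]
  have hlin : (‖z‖ - ‖w‖) * ‖1 - (starRingEnd ℂ) z * w‖ ≤ ‖z - w‖ * (1 - ‖z‖ * ‖w‖) := by
    have h1 : 0 ≤ (‖z‖ - ‖w‖) * ‖1 - (starRingEnd ℂ) z * w‖ := mul_nonneg (by linarith) hD0.le
    have h2 : 0 ≤ ‖z - w‖ * (1 - ‖z‖ * ‖w‖) := by positivity
    exact (pow_le_pow_iff_left₀ h1 h2 (by norm_num)).mp hsq
  have hstep1 : (‖z‖ - ‖w‖) / (1 - ‖z‖ * ‖w‖) ≤ ‖z - w‖ / ‖1 - (starRingEnd ℂ) z * w‖ := by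
    rw [div_le_div_iff₀ hRs1 hD0]; linarith
  -- step 2 : (1-t)/(1+t) ≤ (‖z‖-‖w‖)/(1-‖z‖‖w‖)
  have ha : 0 < 1 - ‖z‖ := by linarith
  have hb : 0 < 1 - ‖w‖ := by linarith
  have hstep2 : (1 - t) / (1 + t) ≤ (‖z‖ - ‖w‖) / (1 - ‖z‖ * ‖w‖) := by
    rw [div_le_div_iff₀ (by linarith) hRs1]
    nlinarith [mul_nonneg ha.le hb.le]
  -- step 3 : exp(-(2t/(1-t))) ≤ (1-t)/(1+t)
  have h1t : 0 < 1 - t := by linarith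
  have h1t' : 0 < 1 + t := by linarith
  have hstep3 : Real.exp (-(2 * t / (1 - t))) ≤ (1 - t) / (1 + t) := by
    have hx : (1 + t) / (1 - t) = 2 * t / (1 - t) + 1 := by field_simp; ring
    have h2 : (1 + t) / (1 - t) ≤ Real.exp (2 * t / (1 - t)) := by
      rw [hx]; exact Real.add_one_le_exp _
    calc Real.exp (-(2 * t / (1 - t))) = (Real.exp (2 * t / (1 - t)))⁻¹ := Real.exp_neg _
      _ ≤ ((1 + t) / (1 - t))⁻¹ := by
          apply inv_anti₀ (by positivity) h2
      _ = (1 - t) / (1 + t) := by rw [inv_div]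
  linarith

lemma decay (l : ℕ → ℂ) (hd : ∀ k, ‖l k‖ < 1) (c : ℝ) (hc0 : 0 < c)
    (hratio : ∀ k, (1 - ‖l (k + 1)‖) / (1 - ‖l k‖) ≤ c) :
    ∀ n j, 1 - ‖l (n + j)‖ ≤ c ^ j * (1 - ‖l n‖) := by
  intro n j
  induction j with
  | zero => simp
  | succ j ih =>
    have h1 : 0 < 1 - ‖l (n + j)‖ := by linarith [hd (n + j)]
    have h2 := hratio (n + j)
    rw [div_le_iff₀ h1] at h2
    calc 1 - ‖l (n + (j + 1))‖ = 1 - ‖l (n + j + 1)‖ := by ring_nf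
      _ ≤ c * (1 - ‖l (n + j)‖) := h2
      _ ≤ c * (c ^ j * (1 - ‖l n‖)) := by nlinarith
      _ = c ^ (j + 1) * (1 - ‖l n‖) := by ring

lemma sum_bound (c : ℝ) (hc0 : 0 < c) (hc1 : c < 1) (n : ℕ) (s : Finset ℕ) (hns : n ∉ s) :
    ∑ k ∈ s, c ^ (max k n - min k n) ≤ 2 * c / (1 - c) := by
  classical
  have h1c : 0 < 1 - c := by linarith
  have hgeo : Summable (fun j : ℕ => c ^ j) := summable_geometric_of_lt_one hc0.le hc1
  have htsum : ∑' j : ℕ, c ^ j = (1 - c)⁻¹ := tsum_geometric_of_lt_one hc0.le hc1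
  set s₁ := s.filter (· < n) with hs₁
  set s₂ := s.filter (n < ·) with hs₂
  have hsplit : s = s₁ ∪ s₂ := by
    ext k
    simp only [hs₁, hs₂, Finset.mem_union, Finset.mem_filter]
    constructor
    · intro hk
      have : k ≠ n := fun h => hns (h ▸ hk)
      rcases lt_or_gt_of_ne this with h | h
      · exact Or.inl ⟨hk, h⟩
      · exact Or.inr ⟨hk, h⟩
    · rintro (⟨hk, _⟩ | ⟨hk, _⟩) <;> exact hk
  have hdisj : Disjoint s₁ s₂ := by
    rw [Finset.disjoint_left]
    intro k hk1 hk2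
    simp only [hs₁, hs₂, Finset.mem_filter] at hk1 hk2
    omega
  have hbound : ∀ (T : Finset ℕ) (f : ℕ → ℕ), (∀ x ∈ T, ∀ y ∈ T, f x = f y → x = y) →
      ∑ k ∈ T, c ^ f k ≤ (1 - c)⁻¹ := by
    intro T f hinj
    calc ∑ k ∈ T, c ^ f k = ∑ j ∈ T.image f, c ^ j := (Finset.sum_image hinj).symm
      _ ≤ ∑' j : ℕ, c ^ j := Summable.sum_le_tsum _ (fun j _ => pow_nonneg hc0.le j) hgeo
      _ = (1 - c)⁻¹ := htsum
  have hb1 : ∑ k ∈ s₁, c ^ (max k n - min k n) ≤ c * (1 - c)⁻¹ := by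
    have : ∀ k ∈ s₁, c ^ (max k n - min k n) = c * c ^ (n - 1 - k) := by
      intro k hk
      simp only [hs₁, Finset.mem_filter] at hk
      have h1 : max k n - min k n = (n - 1 - k) + 1 := by omega
      rw [h1, pow_succ]; ring
    rw [Finset.sum_congr rfl this, ← Finset.mul_sum]
    have := hbound s₁ (fun k => n - 1 - k) (by
      intro x hx y hy h
      simp only [hs₁, Finset.mem_filter] at hx hy
      have h' : n - 1 - x = n - 1 - y := h
      omega)
    exact mul_le_mul_of_nonneg_left this hc0.le
  have hb2 : ∑ k ∈ s₂, c ^ (max k n - min k n) ≤ c * (1 - c)⁻¹ := by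
    have : ∀ k ∈ s₂, c ^ (max k n - min k n) = c * c ^ (k - n - 1) := by
      intro k hk
      simp only [hs₂, Finset.mem_filter] at hk
      have h1 : max k n - min k n = (k - n - 1) + 1 := by omega
      rw [h1, pow_succ]; ring
    rw [Finset.sum_congr rfl this, ← Finset.mul_sum]
    have := hbound s₂ (fun k => k - n - 1) (by
      intro x hx y hy h
      simp only [hs₂, Finset.mem_filter] at hx hy
      have h' : x - n - 1 = y - n - 1 := h
      omega)
    exact mul_le_mul_of_nonneg_left this hc0.le
  calc ∑ k ∈ s, c ^ (max k n - min k n)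
      = ∑ k ∈ s₁, c ^ (max k n - min k n) + ∑ k ∈ s₂, c ^ (max k n - min k n) := by
        rw [hsplit, Finset.sum_union hdisj]
    _ ≤ c * (1 - c)⁻¹ + c * (1 - c)⁻¹ := add_le_add hb1 hb2
    _ = 2 * c / (1 - c) := by field_simp; ring

/-- If `{λ k} ⊂ 𝔻` are pairwise distinct and `(1 - |λ (k+1)|)/(1 - |λ k|) ≤ c < 1`
for all `k`, then `{λ k}` satisfies the Carleson condition. -/
theorem stmt_11 (l : ℕ → ℂ) (hd : ∀ k, ‖l k‖ < 1)
    (hdist : Function.Injective l)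
    (c : ℝ) (hc0 : 0 < c) (hc1 : c < 1)
    (hratio : ∀ k, (1 - ‖l (k + 1)‖) / (1 - ‖l k‖) ≤ c) :
    ∃ δ : ℝ, 0 < δ ∧ ∀ (n : ℕ) (s : Finset ℕ), n ∉ s →
      δ ≤ ∏ k ∈ s, ‖l k - l n‖ / ‖1 - (starRingEnd ℂ) (l k) * l n‖ := by
  have h1c : 0 < 1 - c := by linarith
  refine ⟨Real.exp (-(4 * c / (1 - c) ^ 2)), Real.exp_pos _, ?_⟩
  intro n s hns
  set E : ℕ → ℝ := fun k => Real.exp (-(2 * c ^ (max k n - min k n) / (1 - c))) with hE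
  have hterm : ∀ k ∈ s, E k ≤ ‖l k - l n‖ / ‖1 - (starRingEnd ℂ) (l k) * l n‖ := by
    intro k hk
    have hkn : k ≠ n := fun h => hns (h ▸ hk)
    set j := max k n - min k n with hj
    have hj1 : 1 ≤ j := by
      rcases lt_or_gt_of_ne hkn with h | h <;> omega
    have ht0 : 0 ≤ c ^ j := pow_nonneg hc0.le j
    have htc : c ^ j ≤ c := by
      calc c ^ j ≤ c ^ 1 := pow_le_pow_of_le_one hc0.le hc1.le hj1
        _ = c := pow_one c
    have ht1 : c ^ j < 1 := lt_of_le_of_lt htc hc1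
    have hmono : E k ≤ Real.exp (-(2 * c ^ j / (1 - c ^ j))) := by
      apply Real.exp_le_exp.mpr
      have h2 : 2 * c ^ j / (1 - c ^ j) ≤ 2 * c ^ j / (1 - c) := by
        apply div_le_div_of_nonneg_left (by positivity) (by linarith) (by linarith)
      linarith
    rcases lt_or_gt_of_ne hkn with h | h
    · -- k < n
      have hdec := decay l hd c hc0 hratio k (n - k)
      rw [Nat.add_sub_cancel' h.le] at hdec
      have hjeq : j = n - k := by omega
      have hT := term_ge (l n) (l k) (hd n) (hd k) (c ^ j) ht0 ht1 (by rw [hjeq]; exact hdec)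
      rw [norm_sub_rev (l n), conj_denom_norm (l n) (l k)] at hT
      exact le_trans hmono hT
    · -- n < k
      have hdec := decay l hd c hc0 hratio n (k - n)
      rw [Nat.add_sub_cancel' h.le] at hdec
      have hjeq : j = k - n := by omega
      have hT := term_ge (l k) (l n) (hd k) (hd n) (c ^ j) ht0 ht1 (by rw [hjeq]; exact hdec)
      exact le_trans hmono hT
  have hprod : ∏ k ∈ s, E k ≤ ∏ k ∈ s, ‖l k - l n‖ / ‖1 - (starRingEnd ℂ) (l k) * l n‖ :=
    Finset.prod_le_prod (fun k _ => (Real.exp_pos _).le) hterm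
  refine le_trans ?_ hprod
  rw [hE, ← Real.exp_sum]
  apply Real.exp_le_exp.mpr
  have hsum := sum_bound c hc0 hc1 n s hns
  have heq : ∑ k ∈ s, -(2 * c ^ (max k n - min k n) / (1 - c))
      = -((2 / (1 - c)) * ∑ k ∈ s, c ^ (max k n - min k n)) := by
    rw [Finset.mul_sum, ← Finset.sum_neg_distrib]
    · apply Finset.sum_congr rfl
      intro k _
      field_simp
  rw [heq, neg_le_neg_iff]
  calc (2 / (1 - c)) * ∑ k ∈ s, c ^ (max k n - min k n)
      ≤ (2 / (1 - c)) * (2 * c / (1 - c)) :=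
        mul_le_mul_of_nonneg_left hsum (by positivity)
    _ = 4 * c / (1 - c) ^ 2 := by field_simp; ring
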